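/- Consider the structural model in which, given (X,U,S=1): A ~ Bernoulli(b_a) independent of (X,U); W | (X,U) ~ Normal(β_w + B_{wu}U + B_{wx}X, Σ_w); and E[Y | W, A, X, U, S=1] = b_y + b_{ya}A + β_{yu}ᵀU + β_{y(au)}ᵀ(AU) + β_{yx}ᵀX + β_{yw}ᵀW + β_{y(aw)}ᵀ(AW). If B_{wu} is an invertible square matrix, then the linear function h(W,X) = η₀ + η_wᵀW + η_xᵀX with η₀ = b_{ya} − β_wᵀ B_{wu}^{−T} β_{y(au)}, η_x = −B_{wx}ᵀ B_{wu}^{−T} β_{y(au)}, η_w = B_{wu}^{−T} β_{y(au)} + β_{y(aw)} satisfies E[h(W,X) | X, U, S=1] = E[Y | A=1, X, U, S=1] − E[Y | A=0, X, U, S=1] for all (X,U). -/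

import Mathlib

open MeasureTheory ProbabilityTheory Matrix

noncomputable section

private lemma measurable_dot' {α : Type*} {m : MeasurableSpace α} {n : ℕ} (v : Fin n → ℝ)
    {f : α → Fin n → ℝ} (hf : Measurable[m] f) :
    Measurable[m] fun x => v ⬝ᵥ f x := by
  simp only [dotProduct]
  exact Finset.measurable_sum _ fun i _ =>
    ((measurable_pi_apply i).comp hf).const_mul _

private lemma integrable_dot' {α : Type*} {m : MeasurableSpace α} {μ : Measure α} {n : ℕ}
    (v : Fin n → ℝ) {f : α → Fin n → ℝ} (hf : ∀ i, Integrable (fun ω => f ω i) μ) :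
    Integrable (fun ω => v ⬝ᵥ f ω) μ := by
  simp only [dotProduct]
  exact integrable_finset_sum _ fun i _ => ((hf i).const_mul _)

private lemma measurable_pi'' {α : Type*} {m : MeasurableSpace α} {n : ℕ} {f : α → Fin n → ℝ}
    (hf : ∀ i, Measurable[m] fun x => f x i) : Measurable[m] f := by
  letI := m
  exact measurable_pi_lambda f hf

private lemma sm_of_meas {α : Type*} {m : MeasurableSpace α} {f : α → ℝ}
    (hf : Measurable[m] f) : StronglyMeasurable[m] f := by
  letI := m
  exact hf.stronglyMeasurable

/-- Closed-form outcome bridge (Appendix C of the paper). In the structural model where,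
given `(X,U)` (and `S=1`, which is the ambient measure here): `A` is Bernoulli(`b_a`)
independent of `(X,U)`; `E[W | A,X,U] = β_w + B_wu U + B_wx X` (the mean of the Normal
distribution of `W` given `(X,U)`, which does not depend on `A`); and
`E[Y | W,A,X,U] = b_y + b_ya A + β_yuᵀU + β_yauᵀ(AU) + β_yxᵀX + β_ywᵀW + β_yawᵀ(AW)`,
if `B_wu` is invertible then the linear function `h(W,X) = η₀ + η_wᵀW + η_xᵀX` with
`η₀ = b_ya − β_wᵀB_wu⁻ᵀβ_yau`, `η_x = −B_wxᵀB_wu⁻ᵀβ_yau`, `η_w = B_wu⁻ᵀβ_yau + β_yaw`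
satisfies `E[h(W,X) | X,U] = E[Y | A=1, X,U] − E[Y | A=0, X,U]`. -/
theorem stmt11 {Ω : Type*} [MeasurableSpace Ω] (μ : Measure Ω) [IsProbabilityMeasure μ]
    (d dx : ℕ)
    (U W : Ω → (Fin d → ℝ)) (X : Ω → (Fin dx → ℝ)) (A Y : Ω → ℝ)
    (hU : Measurable U) (hW : Measurable W) (hX : Measurable X)
    (hA : Measurable A) (hY : Measurable Y)
    (hAbin : ∀ ω, A ω = 0 ∨ A ω = 1)
    -- coefficients
    (b_y b_ya b_a : ℝ) (β_yu β_yau β_yw β_yaw β_w : Fin d → ℝ) (β_yx : Fin dx → ℝ)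
    (B_wu : Matrix (Fin d) (Fin d) ℝ) (B_wx : Matrix (Fin d) (Fin dx) ℝ)
    (hBinv : IsUnit B_wu.det)
    -- `A ~ Bernoulli(b_a)` independent of `(X, U)`
    (hba : (μ {ω | A ω = 1}).toReal = b_a) (hba0 : 0 < b_a) (hba1 : b_a < 1)
    (hAindep : ProbabilityTheory.IndepFun A (fun ω => (X ω, U ω)) μ)
    -- conditional mean of `W` given `(A, X, U)` (from `W | (X,U) ~ N(β_w+B_wu U+B_wx X, Σ_w)`)
    (hWmean : ∀ i, condExp
        (MeasurableSpace.comap (fun ω => (A ω, X ω, U ω)) inferInstance) μ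
        (fun ω => W ω i) =ᵐ[μ]
      fun ω => β_w i + B_wu.mulVec (U ω) i + B_wx.mulVec (X ω) i)
    -- conditional mean of `Y` given `(W, A, X, U)`
    (hYmean : condExp
        (MeasurableSpace.comap (fun ω => (W ω, A ω, X ω, U ω)) inferInstance) μ Y =ᵐ[μ]
      fun ω => b_y + b_ya * A ω + β_yu ⬝ᵥ U ω + A ω * (β_yau ⬝ᵥ U ω) + β_yx ⬝ᵥ X ω +
        β_yw ⬝ᵥ W ω + A ω * (β_yaw ⬝ᵥ W ω))
    -- integrability
    (hYint : Integrable Y μ) (hWint : ∀ i, Integrable (fun ω => W ω i) μ)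
    -- bridge coefficients
    (η₀ : ℝ) (η_w : Fin d → ℝ) (η_x : Fin dx → ℝ)
    (hη₀ : η₀ = b_ya - β_w ⬝ᵥ (B_wu.transpose)⁻¹.mulVec β_yau)
    (hη_x : η_x = -(B_wx.transpose.mulVec ((B_wu.transpose)⁻¹.mulVec β_yau)))
    (hη_w : η_w = (B_wu.transpose)⁻¹.mulVec β_yau + β_yaw) :
    condExp (MeasurableSpace.comap (fun ω => (X ω, U ω)) inferInstance) μ
        (fun ω => η₀ + η_w ⬝ᵥ W ω + η_x ⬝ᵥ X ω) =ᵐ[μ]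
      fun ω =>
        condExp (MeasurableSpace.comap (fun ω' => (X ω', U ω')) inferInstance)
          (μ[|{ω' | A ω' = 1}]) Y ω -
        condExp (MeasurableSpace.comap (fun ω' => (X ω', U ω')) inferInstance)
          (μ[|{ω' | A ω' = 0}]) Y ω := by
  rename_i m0 hPM
  have hXUmeas : Measurable fun ω => (X ω, U ω) := hX.prodMk hU
  have hAXUmeas : Measurable fun ω => (A ω, X ω, U ω) := hA.prodMk hXUmeas
  have hWAXUmeas : Measurable fun ω => (W ω, A ω, X ω, U ω) := hW.prodMk hAXUmeas
  have hle : (MeasurableSpace.comap (fun ω => (X ω, U ω)) inferInstance) ≤ m0 := hXUmeas.comap_le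
  have hle' : (MeasurableSpace.comap (fun ω => (A ω, X ω, U ω)) inferInstance) ≤ m0 := hAXUmeas.comap_le
  have hle'' : (MeasurableSpace.comap (fun ω => (W ω, A ω, X ω, U ω)) inferInstance) ≤ m0 := hWAXUmeas.comap_le
  have hXUm : Measurable[(MeasurableSpace.comap (fun ω => (X ω, U ω)) inferInstance)] fun ω => (X ω, U ω) := measurable_iff_comap_le.mpr le_rfl
  have hAXUm : Measurable[(MeasurableSpace.comap (fun ω => (A ω, X ω, U ω)) inferInstance)] fun ω => (A ω, X ω, U ω) := measurable_iff_comap_le.mpr le_rfl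
  have hWAXUm : Measurable[(MeasurableSpace.comap (fun ω => (W ω, A ω, X ω, U ω)) inferInstance)] fun ω => (W ω, A ω, X ω, U ω) :=
    measurable_iff_comap_le.mpr le_rfl
  have h12 : (MeasurableSpace.comap (fun ω => (X ω, U ω)) inferInstance) ≤ (MeasurableSpace.comap (fun ω => (A ω, X ω, U ω)) inferInstance) := Measurable.comap_le (measurable_snd.comp hAXUm)
  have h23 : (MeasurableSpace.comap (fun ω => (A ω, X ω, U ω)) inferInstance) ≤ (MeasurableSpace.comap (fun ω => (W ω, A ω, X ω, U ω)) inferInstance) := Measurable.comap_le (measurable_snd.comp hWAXUm)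
  have hAm' : Measurable[(MeasurableSpace.comap (fun ω => (A ω, X ω, U ω)) inferInstance)] A := measurable_fst.comp hAXUm
  have hXm : Measurable[(MeasurableSpace.comap (fun ω => (X ω, U ω)) inferInstance)] X := measurable_fst.comp hXUm
  have hUm : Measurable[(MeasurableSpace.comap (fun ω => (X ω, U ω)) inferInstance)] U := measurable_snd.comp hXUm
  set mWf : Ω → Fin d → ℝ :=
    fun ω i => β_w i + B_wu.mulVec (U ω) i + B_wx.mulVec (X ω) i with hmWf_def
  have hWmean' : ∀ i, condExp (MeasurableSpace.comap (fun ω => (A ω, X ω, U ω)) inferInstance) μ (fun ω => W ω i) =ᵐ[μ] fun ω => mWf ω i := hWmean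
  have hmWint : ∀ i, Integrable (fun ω => mWf ω i) μ := fun i =>
    integrable_condExp.congr (hWmean' i)
  have hmWm : Measurable[(MeasurableSpace.comap (fun ω => (X ω, U ω)) inferInstance)] mWf := by
    have h1 : ∀ i, Measurable[(MeasurableSpace.comap (fun ω => (X ω, U ω)) inferInstance)] fun ω => mWf ω i := by
      intro i
      have ha : Measurable[(MeasurableSpace.comap (fun ω => (X ω, U ω)) inferInstance)] fun ω => B_wu i ⬝ᵥ U ω := measurable_dot' _ hUm
      have hb : Measurable[(MeasurableSpace.comap (fun ω => (X ω, U ω)) inferInstance)] fun ω => B_wx i ⬝ᵥ X ω := measurable_dot' _ hXm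
      exact (measurable_const.add ha).add hb
    exact measurable_pi'' h1
  have hsetW : ∀ (s : Set Ω), MeasurableSet[(MeasurableSpace.comap (fun ω => (A ω, X ω, U ω)) inferInstance)] s → ∀ v : Fin d → ℝ,
      ∫ ω in s, v ⬝ᵥ W ω ∂μ = ∫ ω in s, v ⬝ᵥ mWf ω ∂μ := by
    intro s hs v
    have h1 : ∀ i, ∫ ω in s, W ω i ∂μ = ∫ ω in s, mWf ω i ∂μ := by
      intro i
      rw [← setIntegral_condExp hle' (hWint i) hs]
      exact integral_congr_ae (ae_restrict_of_ae (hWmean' i))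
    simp only [dotProduct]
    rw [integral_finset_sum _ (fun i _ => ((hWint i).integrableOn.const_mul _)),
        integral_finset_sum _ (fun i _ => ((hmWint i).integrableOn.const_mul _))]
    exact Finset.sum_congr rfl fun i _ => by
      rw [integral_const_mul, integral_const_mul, h1 i]
  have hT1 : MeasurableSet[m0] {ω | A ω = 1} := hA (measurableSet_singleton 1)
  have hp1 : μ {ω | A ω = 1} ≠ 0 := by
    intro h
    apply absurd hba0
    rw [← hba, h]
    simp
  have hT0eq : {ω | A ω = 0} = {ω | A ω = 1}ᶜ := by
    ext ω
    simp only [Set.mem_setOf_eq, Set.mem_compl_iff]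
    constructor
    · intro h h1; rw [h] at h1; norm_num at h1
    · intro h; rcases hAbin ω with h0 | h1
      · exact h0
      · exact absurd h1 h
  have hp0 : μ {ω | A ω = 0} ≠ 0 := by
    rw [hT0eq]
    intro h
    have hc : μ {ω | A ω = 1}ᶜ = 1 - μ {ω | A ω = 1} := by
      rw [measure_compl hT1 (measure_ne_top μ _), measure_univ]
    rw [hc] at h
    have h1 : μ {ω | A ω = 1} = 1 :=
      le_antisymm prob_le_one (tsub_eq_zero_iff_le.mp h)
    rw [h1] at hba
    simp only [ENNReal.toReal_one] at hba
    linarith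
  -- main per-arm computation
  have main : ∀ a : ℝ, μ {ω | A ω = a} ≠ 0 →
      Integrable (fun ω => b_y + b_ya * a + β_yu ⬝ᵥ U ω + a * (β_yau ⬝ᵥ U ω) + β_yx ⬝ᵥ X ω +
        β_yw ⬝ᵥ mWf ω + a * (β_yaw ⬝ᵥ mWf ω)) μ ∧
      condExp (MeasurableSpace.comap (fun ω => (X ω, U ω)) inferInstance) (μ[|{ω | A ω = a}]) Y =ᵐ[μ]
        fun ω => b_y + b_ya * a + β_yu ⬝ᵥ U ω + a * (β_yau ⬝ᵥ U ω) + β_yx ⬝ᵥ X ω +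
          β_yw ⬝ᵥ mWf ω + a * (β_yaw ⬝ᵥ mWf ω) := by
    intro a ha
    set T := {ω | A ω = a} with hT_def
    set g : Ω → ℝ := fun ω => b_y + b_ya * a + β_yu ⬝ᵥ U ω + a * (β_yau ⬝ᵥ U ω) +
        β_yx ⬝ᵥ X ω + β_yw ⬝ᵥ mWf ω + a * (β_yaw ⬝ᵥ mWf ω) with hg_def
    have hTmeas : MeasurableSet[m0] T := hA (measurableSet_singleton a)
    have hTm' : MeasurableSet[(MeasurableSpace.comap (fun ω => (A ω, X ω, U ω)) inferInstance)] T := hAm' (measurableSet_singleton a)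
    have hTtop : μ T ≠ ⊤ := measure_ne_top μ T
    have hcne : (μ T)⁻¹ ≠ ⊤ := ENNReal.inv_ne_top.mpr ha
    haveI hνP : IsProbabilityMeasure (μ[|T]) := cond_isProbabilityMeasure ha
    have hν_def : μ[|T] = (μ T)⁻¹ • μ.restrict T := rfl
    have htrim : (μ[|T]).trim hle = μ.trim hle := by
      refine @Measure.ext Ω (MeasurableSpace.comap (fun ω => (X ω, U ω)) inferInstance)
        _ _ fun s hs => ?_
      rw [trim_measurableSet_eq hle hs, trim_measurableSet_eq hle hs]
      obtain ⟨t, ht, rfl⟩ := hs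
      rw [cond_apply hTmeas]
      have hind := hAindep.measure_inter_preimage_eq_mul {a} t (measurableSet_singleton a) ht
      have hTpre : A ⁻¹' {a} = T := rfl
      rw [hTpre] at hind
      rw [hind, ← mul_assoc, ENNReal.inv_mul_cancel ha hTtop, one_mul]
    set F : Ω → ℝ := fun ω => b_y + b_ya * A ω + β_yu ⬝ᵥ U ω + A ω * (β_yau ⬝ᵥ U ω) +
        β_yx ⬝ᵥ X ω + β_yw ⬝ᵥ W ω + A ω * (β_yaw ⬝ᵥ W ω) with hF_def
    have hFint : Integrable F μ := integrable_condExp.congr hYmean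
    set Wp : Ω → ℝ := fun ω => β_yw ⬝ᵥ W ω + a * (β_yaw ⬝ᵥ W ω) with hWp_def
    set Mp : Ω → ℝ := fun ω => β_yw ⬝ᵥ mWf ω + a * (β_yaw ⬝ᵥ mWf ω) with hMp_def
    have hWpint : Integrable Wp μ :=
      (integrable_dot' β_yw hWint).add ((integrable_dot' β_yaw hWint).const_mul a)
    have hMpint : Integrable Mp μ :=
      (integrable_dot' β_yw hmWint).add ((integrable_dot' β_yaw hmWint).const_mul a)
    have hFT : ∀ᵐ ω ∂(μ.restrict T), F ω = (g ω - Mp ω) + Wp ω := by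
      filter_upwards [ae_restrict_mem hTmeas] with ω hω
      have hA_eq : A ω = a := hω
      simp only [hF_def, hg_def, hWp_def, hMp_def, hA_eq]
      ring
    have hsubint : IntegrableOn (fun ω => g ω - Mp ω) T μ := by
      refine ((hFint.sub hWpint).integrableOn).congr ?_
      filter_upwards [hFT] with ω hω
      simp only [Pi.sub_apply]
      rw [hω]; ring
    have hgaT : IntegrableOn g T μ := by
      refine (hsubint.add hMpint.integrableOn).congr ?_
      exact Filter.Eventually.of_forall fun ω => by
        simp only [Pi.add_apply]; ring
    have hgaν : Integrable g (μ[|T]) := by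
      rw [hν_def]
      exact hgaT.smul_measure hcne
    have hgm : StronglyMeasurable[(MeasurableSpace.comap (fun ω => (X ω, U ω)) inferInstance)] g := by
      apply sm_of_meas
      simp only [hg_def]
      exact ((((measurable_const.add (measurable_dot' β_yu hUm)).add
        ((measurable_dot' β_yau hUm).const_mul a)).add (measurable_dot' β_yx hXm)).add
        (measurable_dot' β_yw hmWm)).add ((measurable_dot' β_yaw hmWm).const_mul a)
    have hYν : Integrable Y (μ[|T]) := by
      rw [hν_def]
      exact hYint.integrableOn.smul_measure hcne
    have hseteq : ∀ s, MeasurableSet[(MeasurableSpace.comap (fun ω => (X ω, U ω)) inferInstance)] s →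
        ∫ x in s, g x ∂(μ[|T]) = ∫ x in s, Y x ∂(μ[|T]) := by
      intro s hs
      have hsm : MeasurableSet[m0] s := hle s hs
      have hsT' : MeasurableSet[(MeasurableSpace.comap (fun ω => (A ω, X ω, U ω)) inferInstance)] (s ∩ T) := (h12 s hs).inter hTm'
      have hsT'' : MeasurableSet[(MeasurableSpace.comap (fun ω => (W ω, A ω, X ω, U ω)) inferInstance)] (s ∩ T) := h23 _ hsT'
      have hrw : ∀ f : Ω → ℝ,
          ∫ x in s, f x ∂(μ[|T]) = (μ T)⁻¹.toReal * ∫ x in s ∩ T, f x ∂μ := by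
        intro f
        rw [hν_def, Measure.restrict_smul, integral_smul_measure,
          Measure.restrict_restrict hsm, smul_eq_mul]
      rw [hrw g, hrw Y]
      congr 1
      have hY1 : ∫ x in s ∩ T, Y x ∂μ = ∫ x in s ∩ T, F x ∂μ := by
        rw [← setIntegral_condExp hle'' hYint hsT'']
        exact integral_congr_ae (ae_restrict_of_ae hYmean)
      have hFsplit : ∫ x in s ∩ T, F x ∂μ =
          (∫ x in s ∩ T, (g x - Mp x) ∂μ) + ∫ x in s ∩ T, Wp x ∂μ := by
        rw [integral_congr_ae
          (ae_restrict_of_ae_restrict_of_subset Set.inter_subset_right hFT)]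
        exact integral_add (hsubint.mono_set Set.inter_subset_right) hWpint.integrableOn
      have hWM : ∫ x in s ∩ T, Wp x ∂μ = ∫ x in s ∩ T, Mp x ∂μ := by
        simp only [hWp_def, hMp_def]
        rw [integral_add ((integrable_dot' β_yw hWint).integrableOn)
              (((integrable_dot' β_yaw hWint).integrableOn).const_mul a),
            integral_add ((integrable_dot' β_yw hmWint).integrableOn)
              (((integrable_dot' β_yaw hmWint).integrableOn).const_mul a),
            integral_const_mul, integral_const_mul,
            hsetW (s ∩ T) hsT' β_yw, hsetW (s ∩ T) hsT' β_yaw]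
      rw [hY1, hFsplit, hWM,
        ← integral_add (hsubint.mono_set Set.inter_subset_right) hMpint.integrableOn]
      exact integral_congr_ae (Filter.Eventually.of_forall fun ω => by simp)
    haveI : SigmaFinite ((μ[|T]).trim hle) := by
      rw [htrim]; infer_instance
    have hcond : g =ᵐ[μ[|T]] condExp (MeasurableSpace.comap (fun ω => (X ω, U ω)) inferInstance) (μ[|T]) Y :=
      ae_eq_condExp_of_forall_setIntegral_eq hle hYν (fun s _ _ => hgaν.integrableOn)
        (fun s hs _ => hseteq s hs) hgm.aestronglyMeasurable
    have hcondμ : condExp (MeasurableSpace.comap (fun ω => (X ω, U ω)) inferInstance) (μ[|T]) Y =ᵐ[μ] g := by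
      have h1 : condExp (MeasurableSpace.comap (fun ω => (X ω, U ω)) inferInstance) (μ[|T]) Y =ᵐ[(μ[|T]).trim hle] g :=
        (StronglyMeasurable.ae_eq_trim_iff hle stronglyMeasurable_condExp hgm).mpr hcond.symm
      rw [htrim] at h1
      exact (StronglyMeasurable.ae_eq_trim_iff hle stronglyMeasurable_condExp hgm).mp h1
    have hgint : Integrable g μ := by
      have h2 : Integrable g ((μ[|T]).trim hle) := hgaν.trim hle hgm
      rw [htrim] at h2
      exact integrable_of_integrable_trim hle h2
    exact ⟨hgint, hcondμ⟩
  obtain ⟨hg1int, hg1⟩ := main 1 hp1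
  obtain ⟨hg0int, hg0⟩ := main 0 hp0
  -- algebraic identity
  have halg : ∀ ω, η₀ + η_w ⬝ᵥ mWf ω + η_x ⬝ᵥ X ω =
      (b_y + b_ya * 1 + β_yu ⬝ᵥ U ω + 1 * (β_yau ⬝ᵥ U ω) + β_yx ⬝ᵥ X ω + β_yw ⬝ᵥ mWf ω +
        1 * (β_yaw ⬝ᵥ mWf ω)) -
      (b_y + b_ya * 0 + β_yu ⬝ᵥ U ω + 0 * (β_yau ⬝ᵥ U ω) + β_yx ⬝ᵥ X ω + β_yw ⬝ᵥ mWf ω +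
        0 * (β_yaw ⬝ᵥ mWf ω)) := by
    intro ω
    subst hη₀ hη_x hη_w
    set v : Fin d → ℝ := (B_wu.transpose)⁻¹.mulVec β_yau with hv_def
    have hkey : B_wu.transpose.mulVec v = β_yau := by
      rw [hv_def, Matrix.mulVec_mulVec,
        Matrix.mul_nonsing_inv _ (by rwa [Matrix.det_transpose]), Matrix.one_mulVec]
    have hmWeq : mWf ω = β_w + B_wu.mulVec (U ω) + B_wx.mulVec (X ω) := by
      funext i
      simp [hmWf_def, Pi.add_apply]
    rw [hmWeq]
    have e1 : v ⬝ᵥ B_wu.mulVec (U ω) = β_yau ⬝ᵥ U ω := by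
      rw [dotProduct_mulVec, ← mulVec_transpose, hkey]
    have e2 : v ⬝ᵥ B_wx.mulVec (X ω) = B_wx.transpose.mulVec v ⬝ᵥ X ω := by
      rw [dotProduct_mulVec, ← mulVec_transpose]
    have e3 : v ⬝ᵥ β_w = β_w ⬝ᵥ v := dotProduct_comm _ _
    simp only [add_dotProduct, dotProduct_add, neg_dotProduct, e1, e2, e3]
    ring
  set Tf : Ω → ℝ := fun ω => η₀ + η_w ⬝ᵥ mWf ω + η_x ⬝ᵥ X ω with hTf_def
  have hTfint : Integrable Tf μ := by
    refine (hg1int.sub hg0int).congr ?_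
    exact Filter.Eventually.of_forall fun ω => (halg ω).symm
  have hXdotint : Integrable (fun ω => η₀ + η_x ⬝ᵥ X ω) μ := by
    refine (hTfint.sub (integrable_dot' η_w hmWint)).congr
      (Filter.Eventually.of_forall fun ω => ?_)
    simp only [hTf_def, Pi.sub_apply]
    ring
  have hhint : Integrable (fun ω => η₀ + η_w ⬝ᵥ W ω + η_x ⬝ᵥ X ω) μ := by
    refine (hXdotint.add (integrable_dot' η_w hWint)).congr
      (Filter.Eventually.of_forall fun ω => ?_)
    simp only [Pi.add_apply]
    ring
  have hTfm : StronglyMeasurable[(MeasurableSpace.comap (fun ω => (X ω, U ω)) inferInstance)] Tf := by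
    apply sm_of_meas
    simp only [hTf_def]
    exact (measurable_const.add (measurable_dot' η_w hmWm)).add (measurable_dot' η_x hXm)
  have hLHS : Tf =ᵐ[μ] condExp (MeasurableSpace.comap (fun ω => (X ω, U ω)) inferInstance) μ (fun ω => η₀ + η_w ⬝ᵥ W ω + η_x ⬝ᵥ X ω) := by
    refine ae_eq_condExp_of_forall_setIntegral_eq hle hhint (fun s _ _ => hTfint.integrableOn)
      (fun s hs _ => ?_) hTfm.aestronglyMeasurable
    have hs' : MeasurableSet[(MeasurableSpace.comap (fun ω => (A ω, X ω, U ω)) inferInstance)] s := h12 s hs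
    calc ∫ x in s, Tf x ∂μ
        = ∫ x in s, ((η₀ + η_x ⬝ᵥ X x) + η_w ⬝ᵥ mWf x) ∂μ :=
          integral_congr_ae (Filter.Eventually.of_forall fun ω => by
            simp only [hTf_def]; ring)
      _ = (∫ x in s, (η₀ + η_x ⬝ᵥ X x) ∂μ) + ∫ x in s, η_w ⬝ᵥ mWf x ∂μ :=
          integral_add hXdotint.integrableOn (integrable_dot' η_w hmWint).integrableOn
      _ = (∫ x in s, (η₀ + η_x ⬝ᵥ X x) ∂μ) + ∫ x in s, η_w ⬝ᵥ W x ∂μ := by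
          rw [hsetW s hs' η_w]
      _ = ∫ x in s, ((η₀ + η_x ⬝ᵥ X x) + η_w ⬝ᵥ W x) ∂μ :=
          (integral_add hXdotint.integrableOn (integrable_dot' η_w hWint).integrableOn).symm
      _ = ∫ x in s, (η₀ + η_w ⬝ᵥ W x + η_x ⬝ᵥ X x) ∂μ :=
          integral_congr_ae (Filter.Eventually.of_forall fun ω => by ring)
  filter_upwards [hLHS, hg1, hg0] with ω h1 h2 h3
  rw [← h1, h2, h3]
  exact halg ω
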